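/- In the support-2 setting with V_i = {a_i, b_i}, 0 < a_i < b_i, and 0 < q_i < 1 the probability of b_i: if p ∈ ∏[a_i,b_i] satisfies p_i > a_i for all i but p ≠ b = (b_1,...,b_n), then R(b) > R(p); i.e., p is not optimal. -/

import Mathlib

open Finset

/-- The maximum utility of the buyer at valuation `v` and prices `p`. -/
noncomputable def maxUtil {n : ℕ} (hn : 0 < n) (v p : Fin n → ℝ) : ℝ :=
  (univ : Finset (Fin n)).sup' ⟨⟨0, hn⟩, mem_univ _⟩ (fun i => v i - p i)

/-- The seller's revenue at valuation `v` and prices `p` under the maximum price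
tie-breaking rule. -/
noncomputable def Rev {n : ℕ} (hn : 0 < n) (v p : Fin n → ℝ) : ℝ :=
  if 0 ≤ maxUtil hn v p then
    sSup {x : ℝ | ∃ i, v i - p i = maxUtil hn v p ∧ p i = x}
  else 0

/-- The expected revenue of price vector `p`. -/
noncomputable def ExpRev {n : ℕ} (hn : 0 < n) (supp : Fin n → Finset ℝ)
    (μ : Fin n → ℝ → ℝ) (p : Fin n → ℝ) : ℝ :=
  ∑ v ∈ Fintype.piFinset supp, (∏ i, μ i (v i)) * Rev hn v p

section Helpers

variable {n : ℕ} (hn : 0 < n) (v r : Fin n → ℝ)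

lemma revSet_bddAbove :
    BddAbove {x : ℝ | ∃ i, v i - r i = maxUtil hn v r ∧ r i = x} := by
  apply Set.Finite.bddAbove
  apply (Set.finite_range r).subset
  rintro x ⟨i, _, rfl⟩
  exact ⟨i, rfl⟩

lemma revSet_nonempty :
    {x : ℝ | ∃ i, v i - r i = maxUtil hn v r ∧ r i = x}.Nonempty := by
  obtain ⟨i, -, hi⟩ :=
    Finset.exists_mem_eq_sup' (⟨⟨0, hn⟩, mem_univ _⟩ : (univ : Finset (Fin n)).Nonempty)
      (fun i => v i - r i)
  exact ⟨r i, i, hi.symm, rfl⟩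

lemma Rev_le_sup' (a b : Fin n → ℝ)
    (hv : ∀ i, v i = a i ∨ v i = b i) (hrl : ∀ i, a i < r i) (hrb : ∀ i, r i ≤ b i)
    (hS : (univ.filter (fun i => v i = b i)).Nonempty) :
    Rev hn v r ≤ (univ.filter (fun i => v i = b i)).sup' hS b := by
  obtain ⟨j, hj⟩ := hS
  rw [mem_filter] at hj
  have hM : 0 ≤ maxUtil hn v r := by
    have h1 : v j - r j ≤ maxUtil hn v r := Finset.le_sup' (fun i => v i - r i) (mem_univ j)
    have h2 : 0 ≤ v j - r j := by rw [hj.2]; linarith [hrb j]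
    linarith
  rw [Rev, if_pos hM]
  apply csSup_le (revSet_nonempty hn v r)
  rintro x ⟨i, hi, rfl⟩
  have hvi : v i = b i := by
    rcases hv i with h | h
    · exfalso; rw [h] at hi; have := hrl i; linarith
    · exact h
  have : r i ≤ b i := hrb i
  have hle : b i ≤ (univ.filter (fun i => v i = b i)).sup' ⟨j, by simp [hj.2]⟩ b :=
    Finset.le_sup' b (by simp [hvi])
  calc r i ≤ b i := hrb i
    _ ≤ _ := hle

lemma sup'_le_Rev_b (a b : Fin n → ℝ) (hab : ∀ i, a i < b i)
    (hv : ∀ i, v i = a i ∨ v i = b i)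
    (hS : (univ.filter (fun i => v i = b i)).Nonempty) :
    (univ.filter (fun i => v i = b i)).sup' hS b ≤ Rev hn v b := by
  obtain ⟨j, hj⟩ := hS
  rw [mem_filter] at hj
  have hM : maxUtil hn v b = 0 := by
    apply le_antisymm
    · apply Finset.sup'_le
      intro i _
      rcases hv i with h | h <;> rw [h] <;> [linarith [hab i]; simp]
    · have h1 : v j - b j ≤ maxUtil hn v b := Finset.le_sup' (fun i => v i - b i) (mem_univ j)
      rw [hj.2] at h1; simpa using h1
  rw [Rev, if_pos (le_of_eq hM.symm)]
  obtain ⟨i1, hi1, hsup⟩ := Finset.exists_mem_eq_sup' (⟨j, by simp [hj.2]⟩ :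
    (univ.filter (fun i => v i = b i)).Nonempty) b
  rw [mem_filter] at hi1
  rw [hsup]
  apply le_csSup (revSet_bddAbove hn v b)
  exact ⟨i1, by rw [hi1.2, hM, sub_self], rfl⟩

lemma Rev_zero_of_all_a (a : Fin n → ℝ) (hv : ∀ i, v i = a i) (hrl : ∀ i, a i < r i) :
    Rev hn v r = 0 := by
  have hM : maxUtil hn v r < 0 := by
    unfold maxUtil
    refine (Finset.sup'_lt_iff ..).2 ?_
    intro i _
    rw [hv i]; linarith [hrl i]
  rw [Rev, if_neg (not_le.2 hM)]

end Helpers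

theorem support_two_all_above_a_not_optimal (n : ℕ) (hn : 0 < n)
    (a b : Fin n → ℝ) (ha : ∀ i, 0 < a i) (hab : ∀ i, a i < b i)
    (q : Fin n → ℝ) (hq : ∀ i, 0 < q i ∧ q i < 1)
    (p : Fin n → ℝ) (hpl : ∀ i, a i < p i) (hpu : ∀ i, p i ≤ b i)
    (hpb : p ≠ b) :
    ExpRev hn (fun i => {a i, b i})
        (fun i x => if x = b i then q i else 1 - q i) p <
      ExpRev hn (fun i => {a i, b i})
        (fun i x => if x = b i then q i else 1 - q i) b := by
  -- find i0 with p i0 < b i0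
  obtain ⟨i0, hi0⟩ : ∃ i, p i ≠ b i := by
    by_contra h
    push_neg at h
    exact hpb (funext h)
  have hi0' : p i0 < b i0 := lt_of_le_of_ne (hpu i0) hi0
  -- the witness valuation
  set v0 : Fin n → ℝ := fun i => if i = i0 then b i else a i with hv0def
  have hv0mem : v0 ∈ Fintype.piFinset (fun i => ({a i, b i} : Finset ℝ)) := by
    rw [Fintype.mem_piFinset]
    intro i
    by_cases h : i = i0 <;> simp [hv0def, h]
  -- generic facts about v in the piFinset
  have hvmem : ∀ v ∈ Fintype.piFinset (fun i => ({a i, b i} : Finset ℝ)),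
      ∀ i, v i = a i ∨ v i = b i := by
    intro v hv i
    rw [Fintype.mem_piFinset] at hv
    simpa using hv i
  have hwpos : ∀ v ∈ Fintype.piFinset (fun i => ({a i, b i} : Finset ℝ)),
      0 < ∏ i, (if v i = b i then q i else 1 - q i) := by
    intro v hv
    apply Finset.prod_pos
    intro i _
    split
    · exact (hq i).1
    · linarith [(hq i).2]
  -- pointwise comparison
  have hle : ∀ v ∈ Fintype.piFinset (fun i => ({a i, b i} : Finset ℝ)),
      Rev hn v p ≤ Rev hn v b := by
    intro v hv
    by_cases hS : (univ.filter (fun i => v i = b i)).Nonempty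
    · calc Rev hn v p ≤ (univ.filter (fun i => v i = b i)).sup' hS b :=
            Rev_le_sup' hn v p a b (hvmem v hv) hpl hpu hS
        _ ≤ Rev hn v b := sup'_le_Rev_b hn v a b hab (hvmem v hv) hS
    · have hva : ∀ i, v i = a i := by
        intro i
        rcases hvmem v hv i with h | h
        · exact h
        · exact absurd ⟨i, by simp [h]⟩ hS
      rw [Rev_zero_of_all_a hn v p a hva hpl,
        Rev_zero_of_all_a hn v b a hva hab]
  -- strict at v0
  have hMv0 : maxUtil hn v0 p = b i0 - p i0 := by
    apply le_antisymm
    · apply Finset.sup'_le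
      intro i _
      by_cases h : i = i0
      · subst h; simp [hv0def]
      · simp only [hv0def, if_neg h]
        have := hpl i
        linarith
    · have h := Finset.le_sup' (fun i => v0 i - p i) (mem_univ i0)
      simpa [hv0def, maxUtil] using h
  have hRev0p : Rev hn v0 p = p i0 := by
    have h0 : (0:ℝ) ≤ maxUtil hn v0 p := by rw [hMv0]; linarith
    rw [Rev, if_pos h0]
    have hset : {x : ℝ | ∃ i, v0 i - p i = maxUtil hn v0 p ∧ p i = x} = {p i0} := by
      ext x
      constructor
      · rintro ⟨i, hi, rfl⟩
        by_cases h : i = i0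
        · subst h; rfl
        · exfalso
          rw [hMv0] at hi
          simp only [hv0def, if_neg h] at hi
          have := hpl i
          linarith
      · rintro rfl
        exact ⟨i0, by rw [hMv0]; simp [hv0def], rfl⟩
    rw [hset, csSup_singleton]
  have hSv0 : (univ.filter (fun i => v0 i = b i)).Nonempty := ⟨i0, by simp [hv0def]⟩
  have hRev0b : b i0 ≤ Rev hn v0 b := by
    have h1 : b i0 ≤ (univ.filter (fun i => v0 i = b i)).sup' hSv0 b :=
      Finset.le_sup' b (by simp [hv0def])
    exact h1.trans (sup'_le_Rev_b hn v0 a b hab (hvmem v0 hv0mem) hSv0)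
  have hstrict : Rev hn v0 p < Rev hn v0 b := by
    rw [hRev0p]; linarith
  -- conclude
  unfold ExpRev
  apply Finset.sum_lt_sum
  · intro v hv
    exact mul_le_mul_of_nonneg_left (hle v hv) (le_of_lt (hwpos v hv))
  · exact ⟨v0, hv0mem, mul_lt_mul_of_pos_left hstrict (hwpos v0 hv0mem)⟩
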